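/- arXiv:1011.3804 — 9 statements merged into one kernel-verified Lean document; each statement's English description precedes it below -/
import Mathlib

section
/- For integers v ≥ k ≥ t ≥ 1, the covering number satisfies the Schönheim bound: C(v,k,t) ≥ ⌈(v/k)·⌈((v-1)/(k-1))·⌈⋯⌈(v-t+1)/(k-t+1)⌉⋯⌉⌉⌉, where the nested ceilings are applied from the innermost factor outward. -/
/-- A `(v,k,t)`-covering design with `N` blocks: a family of `k`-subsets of `Fin v`
such that every `t`-subset is contained in some block. -/
def IsCover (v k t : ℕ) {N : ℕ} (D : Fin N → Finset (Fin v)) : Prop :=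
  (∀ r, (D r).card = k) ∧ ∀ T : Finset (Fin v), T.card = t → ∃ r, T ⊆ D r

/-- The covering number `C(v,k,t)`: minimum number of blocks of a `(v,k,t)`-covering design. -/
noncomputable def coverNum (v k t : ℕ) : ℕ :=
  sInf {N | ∃ D : Fin N → Finset (Fin v), IsCover v k t D}

/-- The nested-ceiling Schönheim expression:
`sch v k t = ⌈(v/k)⌈((v-1)/(k-1))⋯⌈(v-t+1)/(k-t+1)⌉⋯⌉⌉`, built from the innermost
factor outward.  (For an integer `s`, `⌈(v/k)·s⌉ = ⌈v·s/k⌉ = (v·s + k - 1)/k` in `ℕ`.) -/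
def sch : ℕ → ℕ → ℕ → ℕ
  | _, _, 0 => 1
  | v, k, t + 1 => (v * sch (v - 1) (k - 1) t + (k - 1)) / k

open Finset

/-- Covers are preserved by permutations of the ground set. -/
lemma isCover_map {v k t N : ℕ} {D : Fin N → Finset (Fin v)} (h : IsCover v k t D)
    (σ : Equiv.Perm (Fin v)) : IsCover v k t (fun r => (D r).map σ.toEmbedding) := by
  constructor
  · intro r; simp [h.1 r]
  · intro T hT
    obtain ⟨r, hr⟩ := h.2 (T.map σ.symm.toEmbedding) (by simp [hT])
    refine ⟨r, fun a ha => ?_⟩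
    simp only [Finset.mem_map, Equiv.coe_toEmbedding]
    exact ⟨σ.symm a, hr (by simp [ha]), by simp⟩

/-- Key lemma: any `(v,k,t)`-cover has at least `sch v k t` blocks. -/
lemma sch_le_of_isCover (t : ℕ) : ∀ v k N (D : Fin N → Finset (Fin v)),
    IsCover v k t D → sch v k t ≤ N := by
  induction t with
  | zero =>
    intro v k N D h
    obtain ⟨r, -⟩ := h.2 ∅ rfl
    simpa [sch] using Nat.one_le_iff_ne_zero.mpr r.pos.ne'
  | succ t ih =>
    intro v k N D h
    rcases Nat.eq_zero_or_pos k with hk | hk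
    · simp [sch, hk]
    rcases v with _ | m
    · show (0 * sch (0-1) (k-1) t + (k-1)) / k ≤ N
      rw [Nat.zero_mul, Nat.zero_add, Nat.div_eq_of_lt (Nat.sub_lt hk Nat.one_pos)]
      exact Nat.zero_le N
    -- main case v = m + 1
    -- count of blocks containing a point x
    set s := sch m (k - 1) t with hs
    have hcount : ∀ x : Fin (m + 1),
        s ≤ (univ.filter (fun r => x ∈ D r)).card := by
      intro x
      -- transport x to `Fin.last m` by a swap
      set σ := Equiv.swap x (Fin.last m) with hσ
      set D' := fun r => (D r).map σ.toEmbedding with hD'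
      have hcov' : IsCover (m+1) k (t+1) D' := isCover_map h σ
      have hmem : ∀ r, (Fin.last m ∈ D' r) ↔ x ∈ D r := by
        intro r
        simp only [hD', Finset.mem_map, Equiv.coe_toEmbedding]
        constructor
        · rintro ⟨a, ha, hax⟩
          have : a = σ.symm (Fin.last m) := by
            rw [← hax]; simp
          rw [this] at ha
          simpa [hσ, Equiv.swap_apply_right] using ha
        · intro hx
          exact ⟨x, hx, by simp [hσ, Equiv.swap_apply_left]⟩
      have hfe : (univ.filter (fun r => Fin.last m ∈ D' r))
          = (univ.filter (fun r => x ∈ D r)) := by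
        apply Finset.filter_congr; intro r _; simp [hmem r]
      rw [← hfe]
      set S := univ.filter (fun r : Fin N => Fin.last m ∈ D' r) with hS
      -- derived design on Fin m
      set D'' : Fin S.card → Finset (Fin m) :=
        fun i => univ.filter (fun a : Fin m => a.castSucc ∈ D' ((S.equivFin.symm i : {x // x ∈ S}) : Fin N)) with hD''
      have hlastmem : ∀ i, Fin.last m ∈ D' ((S.equivFin.symm i : {x // x ∈ S}) : Fin N) := by
        intro i
        exact (Finset.mem_filter.mp (S.equivFin.symm i).2).2
      have hcover'' : IsCover m (k-1) t D'' := by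
        constructor
        · intro i
          set B := D' ((S.equivFin.symm i : {x // x ∈ S}) : Fin N) with hB
          have hlast : Fin.last m ∈ B := hlastmem i
          have hcard : B.card = k := hcov'.1 _
          have : (D'' i).card = (B.erase (Fin.last m)).card := by
            apply Finset.card_bij (fun a _ => a.castSucc)
            · intro a ha
              rw [Finset.mem_erase]
              refine ⟨(Fin.castSucc_lt_last a).ne, ?_⟩
              simpa [hD''] using ha
            · intro a₁ _ a₂ _ hx
              exact Fin.castSucc_injective _ hx
            · intro b hb
              rw [Finset.mem_erase] at hb
              obtain ⟨a, rfl⟩ := Fin.exists_castSucc_eq.2 hb.1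
              exact ⟨a, by simp only [hD'', Finset.mem_filter, Finset.mem_univ, true_and]; exact hb.2, rfl⟩
          rw [this, Finset.card_erase_of_mem hlast, hcard]
        · intro T hT
          set T' : Finset (Fin (m+1)) := insert (Fin.last m) (T.map Fin.castSuccEmb) with hT'
          have hTcard : T'.card = t + 1 := by
            rw [hT', Finset.card_insert_of_notMem, Finset.card_map, hT]
            simp only [Finset.mem_map]
            rintro ⟨a, -, ha⟩
            exact (Fin.castSucc_lt_last a).ne (by simpa using ha)
          obtain ⟨r, hr⟩ := hcov'.2 T' hTcard
          have hrS : r ∈ S := by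
            rw [hS, Finset.mem_filter]
            exact ⟨Finset.mem_univ r, hr (by simp [hT'])⟩
          refine ⟨S.equivFin ⟨r, hrS⟩, fun a ha => ?_⟩
          simp only [hD'', Finset.mem_filter, Finset.mem_univ, true_and,
            Equiv.symm_apply_apply]
          exact hr (by simp [hT', Finset.mem_map]; exact ha)
      exact ih m (k-1) S.card D'' hcover''
    -- double counting
    have hsum : ∑ x : Fin (m+1), (univ.filter (fun r => x ∈ D r)).card = N * k := by
      have : ∑ x : Fin (m+1), (univ.filter (fun r => x ∈ D r)).card
          = ∑ r : Fin N, (D r).card := by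
        simp only [Finset.card_filter]
        rw [Finset.sum_comm]
        congr 1; ext r
        rw [← Finset.card_filter]
        congr 1
        simp [Finset.filter_mem_eq_inter]
      rw [this]
      simp [h.1, Finset.sum_const, Finset.card_univ, Nat.mul_comm]
    have hle : (m + 1) * s ≤ N * k := by
      calc (m + 1) * s = (Finset.univ : Finset (Fin (m+1))).card • s := by
            simp [Finset.card_univ, smul_eq_mul]
        _ ≤ ∑ x : Fin (m+1), (univ.filter (fun r => x ∈ D r)).card :=
            Finset.card_nsmul_le_sum _ _ _ (fun x _ => hcount x)
        _ = N * k := hsum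
    show ((m+1) * sch (m+1-1) (k-1) t + (k-1)) / k ≤ N
    have : (m+1) * sch m (k-1) t + (k-1) ≤ N * k + (k - 1) :=
      Nat.add_le_add_right (by simpa [hs] using hle) _
    calc ((m+1) * sch (m+1-1) (k-1) t + (k-1)) / k
        ≤ (N * k + (k-1)) / k := Nat.div_le_div_right (by simpa using this)
      _ = N := by
          rw [Nat.add_comm, Nat.mul_comm, Nat.add_mul_div_left _ _ hk,
            Nat.div_eq_of_lt (Nat.sub_lt hk Nat.one_pos), Nat.zero_add]


/-- The Schönheim bound: for `v ≥ k ≥ t ≥ 1`,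
`C(v,k,t) ≥ ⌈(v/k)⌈((v-1)/(k-1))⋯⌈(v-t+1)/(k-t+1)⌉⋯⌉⌉`. -/
theorem schonheim_bound (v k t : ℕ) (ht : 1 ≤ t) (htk : t ≤ k) (hkv : k ≤ v) :
    sch v k t ≤ coverNum v k t := by
  -- the set of cover sizes is nonempty: take all k-subsets
  have hne : {N | ∃ D : Fin N → Finset (Fin v), IsCover v k t D}.Nonempty := by
    set P := (Finset.univ : Finset (Fin v)).powersetCard k with hP
    refine ⟨P.card, fun i => ((P.equivFin.symm i : {x // x ∈ P}) : Finset (Fin v)), ?_, ?_⟩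
    · intro r
      exact (Finset.mem_powersetCard.mp (P.equivFin.symm r).2).2
    · intro T hT
      obtain ⟨B, hTB, hBu, hBc⟩ := Finset.exists_subsuperset_card_eq
        (t := Finset.univ) (n := k) (Finset.subset_univ T) (le_of_eq_of_le hT htk)
        (by simpa [Finset.card_univ] using hkv)
      have hBP : B ∈ P := by rw [hP, Finset.mem_powersetCard]; exact ⟨hBu, hBc⟩
      exact ⟨P.equivFin ⟨B, hBP⟩, by simpa using hTB⟩
  obtain ⟨D, hD⟩ := Nat.sInf_mem hne
  exact sch_le_of_isCover t v k _ D hD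
end

section
/- For vectors v,k of positive integers with k ≤ v componentwise and Σk_i ≥ 2, C(v,k,2) ≥ ⌈(C(v,2) − Σ_{i: k_i=1} C(v_i,2)) / C(k,2)⌉, where v = Σv_i, k = Σk_i, and C(n,2) denotes the binomial coefficient n choose 2 (with C(1,2)=0). -/
open Finset

/-- A generalized covering design of strength `t`: the blocks are indexed by `R`;
block `D r` has `i`-th component a `k i`-subset of the `v i`-set `Fin (v i)`, and every
admissible tuple of sets `T` (componentwise sizes at most `k`, total size `t`) is contained
componentwise in some block. -/
def IsGCD {ι : Type*} [Fintype ι] (v k : ι → ℕ) (t : ℕ) {R : Type*}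
    (D : R → ∀ i, Finset (Fin (v i))) : Prop :=
  (∀ r i, (D r i).card = k i) ∧
  ∀ T : ∀ i, Finset (Fin (v i)),
    (∀ i, (T i).card ≤ k i) → (∑ i, (T i).card) = t →
    ∃ r, ∀ i, T i ⊆ D r i

/-- The generalized covering number: the least `N` such that a generalized covering design
with `N` blocks exists. -/
noncomputable def GCNum {ι : Type*} [Fintype ι] (v k : ι → ℕ) (t : ℕ) : ℕ :=
  sInf {N | ∃ D : Fin N → ∀ i, Finset (Fin (v i)), IsGCD v k t D}

/-- Edge-counting bound:
`C(v,k,2) ≥ ⌈( C(Σv_i,2) - Σ_{i : k_i = 1} C(v_i,2) ) / C(Σk_i,2) ⌉`,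
where `C(n,2) = n.choose 2` and the ceiling `⌈E/K⌉` is written as `(E + (K-1))/K` in `ℕ`. -/
theorem gc_edge_counting_bound {m : ℕ} (v k : Fin m → ℕ)
    (hk : ∀ i, 1 ≤ k i) (hkv : ∀ i, k i ≤ v i) (h2 : 2 ≤ ∑ i, k i) :
    ((∑ i, v i).choose 2 - ∑ i ∈ Finset.univ.filter (fun i => k i = 1), (v i).choose 2
        + ((∑ i, k i).choose 2 - 1)) / (∑ i, k i).choose 2
      ≤ GCNum v k 2 := by
  classical
  -- Step 0: the defining set of GCNum is nonempty (take all k-subsets tuples as blocks).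
  have hb : ∀ T : ∀ i, Finset (Fin (v i)), ∃ Db : ∀ i, Finset (Fin (v i)),
      (∀ i, (Db i).card = k i) ∧ ((∀ i, (T i).card ≤ k i) → ∀ i, T i ⊆ Db i) := by
    intro T
    by_cases hT : ∀ i, (T i).card ≤ k i
    · choose u hu1 _ hu3 using fun i =>
        Finset.exists_subsuperset_card_eq (T i).subset_univ (hT i) (by simpa using hkv i)
      exact ⟨u, hu3, fun _ => hu1⟩
    · choose u _ _ hu3 using fun i =>
        Finset.exists_subsuperset_card_eq (Finset.empty_subset (univ : Finset (Fin (v i))))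
          (Nat.zero_le (k i)) (by simpa using hkv i)
      exact ⟨u, hu3, fun h => absurd h hT⟩
  have hne : {N | ∃ D : Fin N → ∀ i, Finset (Fin (v i)), IsGCD v k 2 D}.Nonempty := by
    refine ⟨Fintype.card (∀ i, Finset (Fin (v i))), ?_⟩
    set e := Fintype.equivFin (∀ i, Finset (Fin (v i))) with he
    refine ⟨fun n => (hb (e.symm n)).choose, fun n i => (hb (e.symm n)).choose_spec.1 i, ?_⟩
    intro T hT _
    exact ⟨e T, by simpa using (hb (e.symm (e T))).choose_spec.2 (by simpa using hT)⟩
  -- get an optimal design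
  set N := GCNum v k 2 with hN
  obtain ⟨D, hDcard, hDcov⟩ :
      ∃ D : Fin N → ∀ i, Finset (Fin (v i)), IsGCD v k 2 D :=
    Nat.sInf_mem hne
  set K := ∑ i, k i with hKdef
  have hK2 : 1 ≤ K.choose 2 := Nat.choose_pos h2
  -- ground set
  let P := Σ i, Fin (v i)
  let part : Fin m → Finset P := fun i => (univ.map ⟨Sigma.mk i, sigma_mk_injective⟩)
  have hpartcard : ∀ i, (part i).card = v i := by intro i; simp [part]
  have hmempart : ∀ (i) (q : P), q ∈ part i ↔ q.1 = i := by
    intro i q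
    constructor
    · intro h
      simp only [part, mem_map, mem_univ, Function.Embedding.coeFn_mk, true_and] at h
      obtain ⟨z, hz⟩ := h
      rw [← hz]
    · intro h
      cases q with
      | mk j z =>
        cases h
        simp [part]
  let S : Fin N → Finset P := fun r => univ.sigma (fun i => D r i)
  have hScard : ∀ r, (S r).card = K := by
    intro r
    show (univ.sigma fun i => D r i).card = K
    rw [Finset.card_sigma, hKdef]
    exact Finset.sum_congr rfl fun i _ => hDcard r i
  let Bad : Finset (Fin m) := univ.filter (fun i => k i = 1)
  let B : Finset (Finset P) := Bad.biUnion (fun i => (part i).powersetCard 2)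
  let A : Finset (Finset P) := (univ : Finset P).powersetCard 2 \ B
  -- Claim 1: every pair in A is inside some block
  have hAsub : A ⊆ univ.biUnion (fun r : Fin N => (S r).powersetCard 2) := by
    intro p hp
    rw [mem_sdiff, mem_powersetCard] at hp
    obtain ⟨⟨-, hp2⟩, hpB⟩ := hp
    set T : ∀ i, Finset (Fin (v i)) := fun l => univ.filter (fun z => (⟨l, z⟩ : P) ∈ p) with hT
    have hsigma : univ.sigma T = p := by
      ext q
      cases q with
      | mk i z => simp [T, Finset.mem_sigma]
    have hsum : ∑ l, (T l).card = 2 := by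
      rw [← Finset.card_sigma, hsigma, hp2]
    have hTle : ∀ l, (T l).card ≤ k l := by
      intro l
      by_contra hcon
      push_neg at hcon
      have h1l : 1 ≤ k l := hk l
      have hTl2 : 2 ≤ (T l).card := by omega
      have hle : (T l).card ≤ ∑ l, (T l).card := by
        refine Finset.single_le_sum (f := fun l => (T l).card) ?_ (mem_univ l)
        exact fun _ _ => Nat.zero_le _
      rw [hsum] at hle
      have hTl : (T l).card = 2 := le_antisymm hle hTl2
      have hkl1 : k l = 1 := by omega
      -- other components are empty
      have hothers : ∀ l', l' ≠ l → T l' = ∅ := by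
        intro l' hl'
        by_contra hcon'
        have h1 : 1 ≤ (T l').card := Finset.card_pos.mpr (Finset.nonempty_iff_ne_empty.mpr hcon')
        have hsplit := Finset.add_sum_erase univ (fun l => (T l).card) (mem_univ l)
        beta_reduce at hsplit
        rw [hsum] at hsplit
        have h2' : (T l').card ≤ ∑ x ∈ univ.erase l, (T x).card := by
          refine Finset.single_le_sum (f := fun l => (T l).card) ?_
            (Finset.mem_erase.mpr ⟨hl', mem_univ l'⟩)
          exact fun _ _ => Nat.zero_le _
        omega
      have hppart : p ⊆ part l := by
        intro q hq
        rw [hmempart]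
        by_contra hql
        have : q.2 ∈ T q.1 := by
          have : q ∈ univ.sigma T := by rw [hsigma]; exact hq
          exact (Finset.mem_sigma.mp this).2
        rw [hothers q.1 hql] at this
        exact absurd this (Finset.notMem_empty _)
      exact hpB (Finset.mem_biUnion.mpr ⟨l, by simp [Bad, hkl1],
        Finset.mem_powersetCard.mpr ⟨hppart, hp2⟩⟩)
    obtain ⟨r, hr⟩ := hDcov T hTle hsum
    refine Finset.mem_biUnion.mpr ⟨r, mem_univ r, Finset.mem_powersetCard.mpr ⟨?_, hp2⟩⟩
    intro q hq
    have hqT : q.2 ∈ T q.1 := by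
      have : q ∈ univ.sigma T := by rw [hsigma]; exact hq
      exact (Finset.mem_sigma.mp this).2
    exact Finset.mem_sigma.mpr ⟨mem_univ _, hr q.1 hqT⟩
  -- Claim 2: |A| = C(V,2) - Σ_{bad} C(v_i,2)
  have hBsub : B ⊆ (univ : Finset P).powersetCard 2 := by
    intro p hp
    obtain ⟨i, -, hpi⟩ := Finset.mem_biUnion.mp hp
    rw [mem_powersetCard] at hpi ⊢
    exact ⟨Finset.subset_univ _, hpi.2⟩
  have hBcard : B.card = ∑ i ∈ Bad, (v i).choose 2 := by
    rw [Finset.card_biUnion]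
    · exact Finset.sum_congr rfl fun i _ => by
        rw [Finset.card_powersetCard, hpartcard]
    · intro i _ j _ hij
      rw [Function.onFun, Finset.disjoint_left]
      intro p hpi hpj
      rw [mem_powersetCard] at hpi hpj
      have hpne : p.Nonempty := Finset.card_pos.mp (by omega)
      obtain ⟨q, hq⟩ := hpne
      have h1 := (hmempart i q).mp (hpi.1 hq)
      have h2 := (hmempart j q).mp (hpj.1 hq)
      exact hij (h1 ▸ h2)
  have hPcard : Fintype.card P = ∑ i, v i := by
    simp [P, Fintype.card_sigma]
  have hAcard : A.card =
      (∑ i, v i).choose 2 - ∑ i ∈ Bad, (v i).choose 2 := by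
    rw [Finset.card_sdiff_of_subset hBsub, hBcard, Finset.card_powersetCard, Finset.card_univ, hPcard]
  -- Claim 3: union of pairs in blocks has at most N * C(K,2) elements
  have hcount : A.card ≤ N * K.choose 2 := by
    calc A.card ≤ (univ.biUnion (fun r : Fin N => (S r).powersetCard 2)).card :=
          Finset.card_le_card hAsub
      _ ≤ ∑ r : Fin N, ((S r).powersetCard 2).card := Finset.card_biUnion_le
      _ = ∑ _r : Fin N, K.choose 2 := by
          exact Finset.sum_congr rfl fun r _ => by
            rw [Finset.card_powersetCard, hScard]
      _ = N * K.choose 2 := by simp [mul_comm]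
  -- final arithmetic
  have hE : (∑ i, v i).choose 2 - ∑ i ∈ Bad, (v i).choose 2 ≤ N * K.choose 2 := by
    rw [← hAcard]; exact hcount
  calc ((∑ i, v i).choose 2 - ∑ i ∈ Bad, (v i).choose 2 + (K.choose 2 - 1)) / K.choose 2
      ≤ (N * K.choose 2 + (K.choose 2 - 1)) / K.choose 2 :=
        Nat.div_le_div_right (by omega)
    _ = N := by
        rw [add_comm, Nat.add_mul_div_right _ _ (by omega : 0 < K.choose 2),
          Nat.div_eq_of_lt (by omega)]
        omega
end

section
/- Let D be a generalized covering design GC(v,k,2) with N blocks, and let I be a nonempty subset of the index set {1,…,m} with k restricted to I not equal to the single-entry vector (1). Then the componentwise restriction of the blocks of D to indices in I is a generalized covering design GC(v^I, k^I, 2); hence C(v,k,2) ≥ C(v^I,k^I,2). -/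
open Finset

lemma gc_restrict_aux {m M : ℕ} (v k : Fin m → ℕ) (t : ℕ)
    (D : Fin M → ∀ i, Finset (Fin (v i))) (hD : IsGCD v k t D) (I : Finset (Fin m)) :
    IsGCD (fun i : {j // j ∈ I} => v i.1) (fun i : {j // j ∈ I} => k i.1) t
        (fun r (i : {j // j ∈ I}) => D r i.1) := by
  obtain ⟨h1, h2⟩ := hD
  refine ⟨fun r i => h1 r i.1, fun T hT hsum => ?_⟩
  classical
  set T' : ∀ i, Finset (Fin (v i)) := fun i => if h : i ∈ I then T ⟨i, h⟩ else ∅ with hT'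
  have hsum' : (∑ i, (T' i).card) = t := by
    rw [← hsum]
    rw [show (∑ i, (T' i).card) = ∑ i ∈ I, (T' i).card by
      refine (Finset.sum_subset (Finset.subset_univ I) ?_).symm
      intro x _ hx
      simp [T', hx]]
    rw [← Finset.sum_attach I (fun i => (T' i).card)]
    refine Finset.sum_congr rfl fun i _ => ?_
    simp [T', i.2]
  obtain ⟨r, hr⟩ := h2 T' (fun i => by
    by_cases h : i ∈ I
    · simpa [T', h] using hT ⟨i, h⟩
    · simp [T', h]) hsum'
  exact ⟨r, fun i => by simpa [T', i.2] using hr i.1⟩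

/-- Restriction: if `D` is a `GC(v,k,2)` with `N` blocks and `I` is a nonempty index set with
`k^I ≠ (1)`, then the componentwise restriction of the blocks of `D` to `I` is a
`GC(v^I,k^I,2)`; hence `C(v,k,2) ≥ C(v^I,k^I,2)`. -/
theorem gc_restriction {m N : ℕ} (v k : Fin m → ℕ)
    (hk : ∀ i, 1 ≤ k i) (hkv : ∀ i, k i ≤ v i)
    (D : Fin N → ∀ i, Finset (Fin (v i))) (hD : IsGCD v k 2 D)
    (I : Finset (Fin m)) (hI : I.Nonempty)
    (hI1 : ¬ ∃ i : Fin m, I = {i} ∧ k i = 1) :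
    IsGCD (fun i : {j // j ∈ I} => v i.1) (fun i : {j // j ∈ I} => k i.1) 2
        (fun r (i : {j // j ∈ I}) => D r i.1)
      ∧ GCNum (fun i : {j // j ∈ I} => v i.1) (fun i : {j // j ∈ I} => k i.1) 2
        ≤ GCNum v k 2 := by
  refine ⟨gc_restrict_aux v k 2 D hD I, ?_⟩
  have hne : {n | ∃ D : Fin n → ∀ i, Finset (Fin (v i)), IsGCD v k 2 D}.Nonempty :=
    ⟨N, D, hD⟩
  obtain ⟨D', hD'⟩ := Nat.sInf_mem hne
  exact Nat.sInf_le ⟨fun r (i : {j // j ∈ I}) => D' r i.1, gc_restrict_aux v k 2 D' hD' I⟩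
end

section
/- Let v,k be vectors with k ≤ v and let D be a GC(v,k,2) of size N. Form v* = (v_1,…,v_m,w) and k* = (k_1,…,k_m,ℓ) where (w,ℓ) = (v_i,k_i) for some fixed index i with k_i ≥ 2. Then there exists a GC(v*,k*,2) of size N. -/
open Finset

/-- Equivalence lemma: from a `GC(v,k,2)` of size `N` and an index `i₀` with `k i₀ ≥ 2`,
one obtains a `GC(v*,k*,2)` of size `N`, where `v* = (v_1,…,v_m,w)`, `k* = (k_1,…,k_m,ℓ)`
with `(w,ℓ) = (v i₀, k i₀)` (the new part is indexed by the `Sum.inr` summand). -/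
theorem gc_add_equivalent_part {m N : ℕ} (v k : Fin m → ℕ)
    (hkv : ∀ i, k i ≤ v i)
    (D : Fin N → ∀ i, Finset (Fin (v i))) (hD : IsGCD v k 2 D)
    (i₀ : Fin m) (hi₀ : 2 ≤ k i₀) :
    ∃ D' : Fin N → ∀ i : Fin m ⊕ Unit, Finset (Fin (Sum.elim v (fun _ => v i₀) i)),
      IsGCD (Sum.elim v (fun _ => v i₀)) (Sum.elim k (fun _ => k i₀)) 2 D' := by
  classical
  obtain ⟨hcard, hcov⟩ := hD
  refine ⟨fun r => fun i => Sum.rec (fun i => D r i) (fun _ => D r i₀) i, fun r i => ?_, ?_⟩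
  · cases i with
    | inl i => exact hcard r i
    | inr u => exact hcard r i₀
  · intro T hT1 hT2
    set T' : ∀ i : Fin m, Finset (Fin (v i)) :=
      Function.update (fun i => T (Sum.inl i)) i₀ (T (Sum.inl i₀) ∪ T (Sum.inr ())) with hT'def
    have hT'i₀ : T' i₀ = T (Sum.inl i₀) ∪ T (Sum.inr ()) := by
      exact Function.update_self _ _ _
    have hT'ne : ∀ i, i ≠ i₀ → T' i = T (Sum.inl i) := by
      intro i hi; exact Function.update_of_ne hi _ _
    have hsub_inl : ∀ i, T (Sum.inl i) ⊆ T' i := by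
      intro i
      by_cases h : i = i₀
      · subst h; rw [hT'i₀]; exact Finset.subset_union_left
      · rw [hT'ne i h]
    have hsub_inr : T (Sum.inr ()) ⊆ T' i₀ := by
      rw [hT'i₀]; exact Finset.subset_union_right
    -- abbreviations for the arithmetic
    have hsum : (∑ i ∈ Finset.univ.erase i₀, (T (Sum.inl i)).card)
        + (T (Sum.inl i₀)).card + (T (Sum.inr ())).card = 2 := by
      have h0 : (∑ i : Fin m, (T (Sum.inl i)).card) + (T (Sum.inr ())).card = 2 := by
        rw [← hT2, Fintype.sum_sum_type]
        simp
      rw [← Finset.add_sum_erase Finset.univ (fun i => (T (Sum.inl i)).card)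
        (Finset.mem_univ i₀)] at h0
      omega
    have herase : ∀ i ∈ Finset.univ.erase i₀, (T' i).card = (T (Sum.inl i)).card := by
      intro i hi
      rw [hT'ne i (Finset.ne_of_mem_erase hi)]; rfl
    have hsplit : ∑ i : Fin m, (T' i).card
        = (T' i₀).card + ∑ i ∈ Finset.univ.erase i₀, (T (Sum.inl i)).card := by
      rw [← Finset.add_sum_erase Finset.univ (fun i => (T' i).card) (Finset.mem_univ i₀),
        Finset.sum_congr rfl herase]
    have hu_le : (T' i₀).card ≤ (T (Sum.inl i₀)).card + (T (Sum.inr ())).card := by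
      rw [hT'i₀]; exact Finset.card_union_le _ _
    have hu_ge₁ : (T (Sum.inl i₀)).card ≤ (T' i₀).card :=
      Finset.card_le_card (hsub_inl i₀)
    have hu_ge₂ : (T (Sum.inr ())).card ≤ (T' i₀).card :=
      Finset.card_le_card hsub_inr
    -- find a padded family U covering T' with total size exactly 2
    have key : ∃ U : ∀ i, Finset (Fin (v i)), (∀ i, T' i ⊆ U i) ∧
        (∀ i, (U i).card ≤ k i) ∧ (∑ i, (U i).card) = 2 := by
      by_cases hcase : (∑ i : Fin m, (T' i).card) = 2
      · refine ⟨T', fun i => Finset.Subset.refl _, fun i => ?_, hcase⟩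
        by_cases h : i = i₀
        · rw [h]
          have : (T' i₀).card ≤ ∑ i : Fin m, (T' i).card :=
            Finset.single_le_sum (f := fun i => (T' i).card) (fun i _ => Nat.zero_le _) (Finset.mem_univ i₀)
          omega
        · rw [hT'ne i h]; exact hT1 (Sum.inl i)
      · -- then the total is 1, concentrated at i₀
        have htot : (∑ i : Fin m, (T' i).card) = 1 ∧ (T' i₀).card = 1 ∧
            (∑ i ∈ Finset.univ.erase i₀, (T (Sum.inl i)).card) = 0 := by
          rw [hsplit] at hcase ⊢
          omega
        obtain ⟨-, hc1, hrest⟩ := htot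
        have hv2 : 2 ≤ Fintype.card (Fin (v i₀)) := by
          rw [Fintype.card_fin]; exact le_trans hi₀ (hkv i₀)
        obtain ⟨B, hB_sub, hB_card⟩ :=
          Finset.exists_superset_card_eq (n := 2) (by omega : (T' i₀).card ≤ 2) hv2
        refine ⟨Function.update T' i₀ B, fun i => ?_, fun i => ?_, ?_⟩
        · by_cases h : i = i₀
          · subst h; rw [Function.update_self]; exact hB_sub
          · rw [Function.update_of_ne h]
        · by_cases h : i = i₀
          · subst h; rw [Function.update_self, hB_card]; exact hi₀
          · rw [Function.update_of_ne h, hT'ne i h]; exact hT1 (Sum.inl i)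
        · rw [← Finset.add_sum_erase Finset.univ
            (fun i => (Function.update T' i₀ B i).card) (Finset.mem_univ i₀)]
          have : ∀ i ∈ Finset.univ.erase i₀,
              (Function.update T' i₀ B i).card = (T (Sum.inl i)).card := by
            intro i hi
            rw [Function.update_of_ne (Finset.ne_of_mem_erase hi),
              hT'ne i (Finset.ne_of_mem_erase hi)]; rfl
          rw [Finset.sum_congr rfl this, hrest, Function.update_self, hB_card]
    obtain ⟨U, hU_sub, hU_card, hU_sum⟩ := key
    obtain ⟨r, hr⟩ := hcov U hU_card hU_sum
    refine ⟨r, fun i => ?_⟩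
    cases i with
    | inl i => exact (hsub_inl i).trans ((hU_sub i).trans (hr i))
    | inr u =>
      cases u
      exact hsub_inr.trans ((hU_sub i₀).trans (hr i₀))
end

section
/- Suppose k_i ≥ 2 for all i, and let R be a set of representatives of the equivalence classes of indices under i ∼ j iff (v_i,k_i)=(v_j,k_j). Then C(v,k,2) = C(v^R, k^R, 2). -/
open Finset

/-- Auxiliary: a tuple of total size between 1 and 2 is still covered by some block of a
strength-2 generalized covering design, by enlarging it to a tuple of total size 2. -/
lemma cover_small {ι : Type*} [Fintype ι] [DecidableEq ι] (v k : ι → ℕ)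
    (hk : ∀ i, 2 ≤ k i) (hkv : ∀ i, k i ≤ v i)
    {B : Type*} (D : B → ∀ i, Finset (Fin (v i))) (hD : IsGCD v k 2 D)
    (S : ∀ i, Finset (Fin (v i))) (hle : ∀ i, (S i).card ≤ k i)
    (h1 : 1 ≤ ∑ i, (S i).card) (h2 : ∑ i, (S i).card ≤ 2) :
    ∃ r, ∀ i, S i ⊆ D r i := by
  rcases eq_or_lt_of_le h2 with heq | hlt
  · exact hD.2 S hle heq
  · -- total size is 1
    have hsum1 : ∑ i, (S i).card = 1 := by omega
    -- find the index carrying the single point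
    have hex : ∃ j, (S j).Nonempty := by
      by_contra hall
      push_neg at hall
      have : ∑ i, (S i).card = 0 := by
        apply Finset.sum_eq_zero
        intro i _
        simpa [Finset.card_eq_zero, ← Finset.not_nonempty_iff_eq_empty] using hall i
      omega
    obtain ⟨j₀, hj₀⟩ := hex
    have hcardj₀ : (S j₀).card = 1 := by
      have hle1 : (S j₀).card ≤ 1 := by
        have h' : (S j₀).card ≤ ∑ i, (S i).card :=
          Finset.single_le_sum (f := fun i => (S i).card)
            (fun i _ => Nat.zero_le _) (Finset.mem_univ j₀)
        omega
      have : 1 ≤ (S j₀).card := Finset.card_pos.mpr hj₀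
      omega
    -- pick a second point
    have hlt' : (S j₀).card < v j₀ := by
      have := hk j₀; have := hkv j₀; omega
    have hne : S j₀ ≠ univ := by
      intro he
      rw [he, Finset.card_univ, Fintype.card_fin] at hlt'
      omega
    have hy : ∃ y, y ∉ S j₀ := by
      by_contra hall
      push_neg at hall
      exact hne (Finset.eq_univ_iff_forall.2 hall)
    obtain ⟨y, hy⟩ := hy
    -- enlarge
    set S' : ∀ i, Finset (Fin (v i)) := Function.update S j₀ (insert y (S j₀)) with hS'
    have hS'j₀ : S' j₀ = insert y (S j₀) := by simp [hS']
    have hS'other : ∀ i, i ≠ j₀ → S' i = S i := by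
      intro i hi; simp [hS', Function.update_of_ne hi]
    have hcard' : ∀ i, (S' i).card ≤ k i := by
      intro i
      by_cases hi : i = j₀
      · subst hi
        rw [hS'j₀, Finset.card_insert_of_notMem hy, hcardj₀]
        exact hk i
      · rw [hS'other i hi]; exact hle i
    have hsum' : ∑ i, (S' i).card = 2 := by
      have hadd0 : (S j₀).card + ∑ i ∈ univ.erase j₀, (S i).card = ∑ i, (S i).card :=
        Finset.add_sum_erase univ (fun i => (S i).card) (Finset.mem_univ j₀)
      have hrest : ∑ i ∈ univ.erase j₀, (S i).card = 0 := by omega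
      have hrest' : ∑ i ∈ univ.erase j₀, (S' i).card = 0 := by
        rw [Finset.sum_eq_zero]
        intro i hi
        rw [hS'other i (Finset.ne_of_mem_erase hi)]
        exact Finset.sum_eq_zero_iff.mp hrest i hi
      have hadd : (S' j₀).card + ∑ i ∈ univ.erase j₀, (S' i).card = ∑ i, (S' i).card :=
        Finset.add_sum_erase univ (fun i => (S' i).card) (Finset.mem_univ j₀)
      have hins : (S' j₀).card = 2 := by
        rw [hS'j₀, Finset.card_insert_of_notMem hy, hcardj₀]
      omega
    obtain ⟨r, hr⟩ := hD.2 S' hcard' hsum'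
    refine ⟨r, fun i => ?_⟩
    by_cases hi : i = j₀
    · subst hi
      exact (Finset.subset_insert _ _).trans (by rw [← hS'j₀]; exact hr i)
    · rw [← hS'other i hi]; exact hr i

/-- If all `k_i ≥ 2` and `R` is a set of representatives of the equivalence classes of
indices under `i ∼ j ↔ (v_i,k_i) = (v_j,k_j)`, then `C(v,k,2) = C(v^R,k^R,2)`. -/
theorem gc_equivalence_classes {m : ℕ} (v k : Fin m → ℕ)
    (hk : ∀ i, 2 ≤ k i) (hkv : ∀ i, k i ≤ v i)
    (R : Finset (Fin m))
    (hrep : ∀ i : Fin m, ∃ j ∈ R, v j = v i ∧ k j = k i)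
    (huniq : ∀ j₁ ∈ R, ∀ j₂ ∈ R, v j₁ = v j₂ → k j₁ = k j₂ → j₁ = j₂) :
    GCNum v k 2
      = GCNum (fun i : {j // j ∈ R} => v i.1) (fun i : {j // j ∈ R} => k i.1) 2 := by
  have key : {N | ∃ D : Fin N → ∀ i, Finset (Fin (v i)), IsGCD v k 2 D}
      = {N | ∃ D : Fin N → ∀ i : {j // j ∈ R}, Finset (Fin (v i.1)),
          IsGCD (fun i : {j // j ∈ R} => v i.1) (fun i : {j // j ∈ R} => k i.1) 2 D} := by
    ext N
    constructor
    · rintro ⟨D, hcard, hcov⟩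
      refine ⟨fun r i => D r i.1, fun r i => hcard r i.1, ?_⟩
      intro T' hT'le hT'sum
      classical
      set T : ∀ i, Finset (Fin (v i)) := fun i => if h : i ∈ R then T' ⟨i, h⟩ else ∅ with hT
      have hTin : ∀ (i : Fin m) (h : i ∈ R), T i = T' ⟨i, h⟩ := by
        intro i h; simp [hT, h]
      have hTout : ∀ i, i ∉ R → T i = ∅ := by
        intro i h; simp [hT, h]
      have hTcard : ∀ i, (T i).card ≤ k i := by
        intro i
        by_cases h : i ∈ R
        · rw [hTin i h]; exact hT'le ⟨i, h⟩
        · rw [hTout i h]; simp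
      have hTsum2 : ∑ i, (T i).card = 2 := by
        calc ∑ i, (T i).card
            = ∑ i ∈ R, (T i).card := by
              refine (Finset.sum_subset R.subset_univ ?_).symm
              intro i _ h; rw [hTout i h]; simp
          _ = ∑ i ∈ R.attach, (T i.1).card := (Finset.sum_attach R _).symm
          _ = ∑ i : {j // j ∈ R}, (T' i).card := by
              rw [Finset.univ_eq_attach]
              exact Finset.sum_congr rfl fun i _ => by rw [hTin i.1 i.2]
          _ = 2 := hT'sum
      obtain ⟨r, hr⟩ := hcov T hTcard hTsum2
      refine ⟨r, fun i => ?_⟩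
      have h := hr i.1
      rw [hTin i.1 i.2] at h
      exact h
    · rintro ⟨D', hcard', hcov'⟩
      classical
      set rep : Fin m → {j // j ∈ R} := fun i => ⟨(hrep i).choose, (hrep i).choose_spec.1⟩
        with hrepdef
      have hv : ∀ i, v (rep i).1 = v i := fun i => (hrep i).choose_spec.2.1
      have hkr : ∀ i, k (rep i).1 = k i := fun i => (hrep i).choose_spec.2.2
      refine ⟨fun r i => (D' r (rep i)).map (finCongr (hv i)).toEmbedding, ?_, ?_⟩
      · intro r i
        rw [Finset.card_map, hcard' r (rep i)]
        exact hkr i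
      · intro T hTle hTsum
        -- push T down to the representatives
        set T' : ∀ j : {j // j ∈ R}, Finset (Fin (v j.1)) := fun j =>
          Finset.univ.biUnion fun i : Fin m =>
            if h : rep i = j then
              (T i).map (finCongr ((hv i).symm.trans
                (congrArg (fun x : {j // j ∈ R} => v x.1) h))).toEmbedding
            else ∅ with hT'
        have hsub : ∀ i, (T i).map (finCongr (hv i).symm).toEmbedding ⊆ T' (rep i) := by
          intro i
          refine Finset.Subset.trans ?_
            (Finset.subset_biUnion_of_mem (s := Finset.univ) _ (Finset.mem_univ i))
          rw [dif_pos rfl]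
        have hT'le2 : ∀ j, (T' j).card ≤ ∑ i : Fin m,
            (if h : rep i = j then
              ((T i).map (finCongr ((hv i).symm.trans
                (congrArg (fun x : {j // j ∈ R} => v x.1) h))).toEmbedding) else ∅).card :=
          fun j => Finset.card_biUnion_le
        have hterm : ∀ (j) (i : Fin m),
            (if h : rep i = j then
              ((T i).map (finCongr ((hv i).symm.trans
                (congrArg (fun x : {j // j ∈ R} => v x.1) h))).toEmbedding) else ∅).card
            ≤ (T i).card := by
          intro j i
          by_cases h : rep i = j
          · rw [dif_pos h, Finset.card_map]
          · rw [dif_neg h]; simp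
        have hT'le : ∀ j, (T' j).card ≤ 2 := by
          intro j
          refine (hT'le2 j).trans ?_
          calc ∑ i : Fin m, _ ≤ ∑ i : Fin m, (T i).card :=
                Finset.sum_le_sum fun i _ => hterm j i
            _ = 2 := hTsum
        have hsumub : ∑ j : {j // j ∈ R}, (T' j).card ≤ 2 := by
          calc ∑ j : {j // j ∈ R}, (T' j).card
              ≤ ∑ j : {j // j ∈ R}, ∑ i : Fin m,
                (if h : rep i = j then
                  ((T i).map (finCongr ((hv i).symm.trans
                    (congrArg (fun x : {j // j ∈ R} => v x.1) h))).toEmbedding) else ∅).card :=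
                Finset.sum_le_sum fun j _ => hT'le2 j
            _ = ∑ i : Fin m, ∑ j : {j // j ∈ R},
                (if h : rep i = j then
                  ((T i).map (finCongr ((hv i).symm.trans
                    (congrArg (fun x : {j // j ∈ R} => v x.1) h))).toEmbedding) else ∅).card :=
                Finset.sum_comm
            _ ≤ ∑ i : Fin m, (T i).card := by
                refine Finset.sum_le_sum fun i _ => ?_
                rw [Finset.sum_eq_single (rep i)]
                · rw [dif_pos rfl, Finset.card_map]
                · intro j _ hj; rw [dif_neg (Ne.symm hj)]; simp
                · intro h; exact absurd (Finset.mem_univ _) h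
            _ = 2 := hTsum
        have hsumlb : 1 ≤ ∑ j : {j // j ∈ R}, (T' j).card := by
          have hex : ∃ i, (T i).Nonempty := by
            by_contra hall
            push_neg at hall
            have : ∑ i, (T i).card = 0 := Finset.sum_eq_zero fun i _ => by
              simpa [Finset.card_eq_zero, ← Finset.not_nonempty_iff_eq_empty] using hall i
            omega
          obtain ⟨i, hi⟩ := hex
          have : (T' (rep i)).Nonempty := by
            obtain ⟨x, hx⟩ := hi
            exact ⟨_, hsub i (Finset.mem_map_of_mem _ hx)⟩
          have h1 : 1 ≤ (T' (rep i)).card := Finset.card_pos.mpr this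
          have h2' : (T' (rep i)).card ≤ ∑ j : {j // j ∈ R}, (T' j).card :=
            Finset.single_le_sum (f := fun j => (T' j).card)
              (fun j _ => Nat.zero_le _) (Finset.mem_univ (rep i))
          omega
        obtain ⟨r, hr⟩ := cover_small (fun j : {j // j ∈ R} => v j.1)
          (fun j : {j // j ∈ R} => k j.1) (fun j => hk j.1) (fun j => hkv j.1)
          D' ⟨hcard', hcov'⟩ T'
          (fun j => (hT'le j).trans (hk j.1)) hsumlb hsumub
        refine ⟨r, fun i => ?_⟩
        intro x hx
        have h1 : (finCongr (hv i)).symm x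
            ∈ (T i).map (finCongr (hv i).symm).toEmbedding := by
          have : (finCongr (hv i)).symm x = (finCongr (hv i).symm) x := by
            simp [finCongr]
          rw [this]
          exact Finset.mem_map_of_mem _ hx
        have h2 : (finCongr (hv i)).symm x ∈ D' r (rep i) :=
          (hr (rep i)) (hsub i h1)
        have h3 : (finCongr (hv i)) ((finCongr (hv i)).symm x)
            ∈ (D' r (rep i)).map (finCongr (hv i)).toEmbedding :=
          Finset.mem_map_of_mem _ h2
        simpa using h3
  rw [GCNum, GCNum, key]
end

section
/- Suppose k_i ≥ 2 for all i, and let v_max = max_i v_i and k_min = min_i k_i. Then C(v,k,2) ≤ C(v_max, k_min, 2), where the right side is the ordinary covering number. -/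
open Finset

/-- If all `k_i ≥ 2`, then `C(v,k,2) ≤ C(v_max, k_min, 2)`. -/
theorem gc_le_maxmin {m : ℕ} (hm : 0 < m) (v k : Fin m → ℕ)
    (hk : ∀ i, 2 ≤ k i) (hkv : ∀ i, k i ≤ v i) :
    GCNum v k 2
      ≤ coverNum (Finset.univ.sup v)
          (Finset.univ.inf' (Finset.univ_nonempty_iff.mpr ⟨⟨0, hm⟩⟩) k) 2 := by
  classical
  set vmax := Finset.univ.sup v with hvmax
  set kmin := Finset.univ.inf' (Finset.univ_nonempty_iff.mpr ⟨⟨0, hm⟩⟩) k with hkmin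
  have hv : ∀ i, v i ≤ vmax := fun i => Finset.le_sup (mem_univ i)
  have hkm : ∀ i, kmin ≤ k i := fun i => Finset.inf'_le _ (mem_univ i)
  have h2 : 2 ≤ kmin := Finset.le_inf' _ _ fun i _ => hk i
  have hkv' : kmin ≤ vmax := le_trans (hkm ⟨0, hm⟩) (le_trans (hkv _) (hv _))
  have h2v : 2 ≤ vmax := le_trans h2 hkv'
  -- key: any cover yields a GCD with the same number of blocks
  have key : ∀ N (D : Fin N → Finset (Fin vmax)), IsCover vmax kmin 2 D →
      ∃ D' : Fin N → ∀ i, Finset (Fin (v i)), IsGCD v k 2 D' := by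
    intro N D hD
    have hPre : ∀ (r : Fin N) (i : Fin m),
        ∃ Q : Finset (Fin (v i)),
          (univ.filter (fun x => Fin.castLE (hv i) x ∈ D r)) ⊆ Q ∧ Q.card = k i := by
      intro r i
      have hsub : (univ.filter (fun x => Fin.castLE (hv i) x ∈ D r)) ⊆ univ :=
        Finset.subset_univ _
      have hcard : (univ.filter (fun x => Fin.castLE (hv i) x ∈ D r)).card ≤ k i := by
        have : (univ.filter (fun x => Fin.castLE (hv i) x ∈ D r)).card ≤ (D r).card := by
          apply Finset.card_le_card_of_injOn (Fin.castLE (hv i))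
          · intro x hx
            simpa using (Finset.mem_filter.mp hx).2
          · intro a _ b _ hab
            exact Fin.castLE_injective _ hab
        calc _ ≤ (D r).card := this
          _ = kmin := hD.1 r
          _ ≤ k i := hkm i
      have hcu : k i ≤ (univ : Finset (Fin (v i))).card := by
        simpa using hkv i
      obtain ⟨Q, h1, _, h3⟩ := Finset.exists_subsuperset_card_eq hsub hcard hcu
      exact ⟨Q, h1, h3⟩
    refine ⟨fun r i => (hPre r i).choose, fun r i => (hPre r i).choose_spec.2, ?_⟩
    intro T hT1 hT2
    set S : Finset (Fin vmax) := univ.biUnion (fun i => (T i).image (Fin.castLE (hv i)))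
      with hS
    have hScard : S.card ≤ 2 := by
      calc S.card ≤ ∑ i, ((T i).image (Fin.castLE (hv i))).card :=
            Finset.card_biUnion_le
        _ ≤ ∑ i, (T i).card := Finset.sum_le_sum fun i _ => Finset.card_image_le
        _ = 2 := hT2
    obtain ⟨S2, hSS2, _, hS2card⟩ :=
      Finset.exists_subsuperset_card_eq (Finset.subset_univ S) hScard
        (by simpa using h2v)
    obtain ⟨r, hr⟩ := hD.2 S2 hS2card
    refine ⟨r, fun i => ?_⟩
    intro x hx
    apply (hPre r i).choose_spec.1
    simp only [Finset.mem_filter, Finset.mem_univ, true_and]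
    apply hr
    apply hSS2
    exact Finset.mem_biUnion.mpr ⟨i, mem_univ i, Finset.mem_image_of_mem _ hx⟩
  -- the cover set is nonempty (trivial cover by all kmin-subsets)
  have hne : {N | ∃ D : Fin N → Finset (Fin vmax), IsCover vmax kmin 2 D}.Nonempty := by
    set P := (univ : Finset (Fin vmax)).powersetCard kmin with hP
    have hPne : ∀ p : {s // s ∈ P}, (p : Finset (Fin vmax)).card = kmin := by
      intro p
      exact (Finset.mem_powersetCard.mp p.2).2
    refine ⟨P.card, ?_⟩
    have e := (Finset.equivFin P).symm
    refine ⟨fun n => (e n : Finset (Fin vmax)), fun r => hPne _, ?_⟩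
    intro T hT
    obtain ⟨B, hTB, hBu, hBc⟩ := Finset.exists_subsuperset_card_eq (n := kmin)
      (Finset.subset_univ T) (by rw [hT]; exact h2) (by simpa using hkv')
    have hBP : B ∈ P := Finset.mem_powersetCard.mpr ⟨hBu, hBc⟩
    refine ⟨e.symm ⟨B, hBP⟩, ?_⟩
    simpa using hTB
  have hmem := Nat.sInf_mem hne
  obtain ⟨D, hD⟩ := hmem
  obtain ⟨D', hD'⟩ := key _ D hD
  exact Nat.sInf_le ⟨D', hD'⟩
end

section
/- Suppose k_i ≥ 2 for all i and there exists an index i with v_i = max_j v_j and k_i = min_j k_j. Then C(v,k,2) = C(v_max, k_min, 2). -/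
open Finset

/-- If all `k_i ≥ 2` and some index `i₀` attains both `v_{i₀} = v_max` and `k_{i₀} = k_min`,
then `C(v,k,2) = C(v_max, k_min, 2)`. -/
theorem gc_eq_maxmin {m : ℕ} (v k : Fin m → ℕ)
    (hk : ∀ i, 2 ≤ k i) (hkv : ∀ i, k i ≤ v i) (i₀ : Fin m)
    (hmax : v i₀ = Finset.univ.sup v)
    (hmin : k i₀ = Finset.univ.inf' (Finset.univ_nonempty_iff.mpr ⟨i₀⟩) k) :
    GCNum v k 2
      = coverNum (Finset.univ.sup v)
          (Finset.univ.inf' (Finset.univ_nonempty_iff.mpr ⟨i₀⟩) k) 2 := by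
  unfold GCNum coverNum IsGCD IsCover
  set V := Finset.univ.sup v with hV
  set K := Finset.univ.inf' (Finset.univ_nonempty_iff.mpr ⟨i₀⟩) k with hKdef
  have hVle : ∀ i, v i ≤ V := fun i => Finset.le_sup (mem_univ i)
  have hKle : ∀ i, K ≤ k i := fun i => Finset.inf'_le _ (mem_univ i)
  have hK2 : 2 ≤ K := hmin ▸ hk i₀
  have hKV : K ≤ V := hmin ▸ hmax ▸ hkv i₀
  congr 1
  ext N
  simp only [Set.mem_setOf_eq]
  constructor
  · rintro ⟨D, hDcard, hDcov⟩
    refine ⟨fun r => (D r i₀).map ⟨Fin.cast hmax, Fin.cast_injective hmax⟩, ?_, ?_⟩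
    · intro r; rw [card_map, hDcard, hmin]
    · intro T hT
      set T' : ∀ i, Finset (Fin (v i)) := fun i =>
        if h : i = i₀ then
          T.map ⟨Fin.cast (show V = v i by rw [h, hmax]),
            Fin.cast_injective _⟩ else ∅ with hT'
      have h1 : ∀ i, (T' i).card ≤ k i := by
        intro i
        by_cases h : i = i₀
        · subst h
          simpa only [hT', dif_pos rfl, card_map, hT] using hk i
        · simp [hT', dif_neg h]
      have h2 : (∑ i, (T' i).card) = 2 := by
        rw [Finset.sum_eq_single i₀]
        · simp [hT', card_map, hT]
        · intro b _ hb; simp [hT', dif_neg hb]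
        · intro h; exact absurd (mem_univ i₀) h
      obtain ⟨r, hr⟩ := hDcov T' h1 h2
      refine ⟨r, fun x hx => ?_⟩
      have hx' : (Fin.cast (show V = v i₀ by rw [hmax]) x) ∈ T' i₀ := by
        simp only [hT', dif_pos rfl, mem_map]
        exact ⟨x, hx, rfl⟩
      have := hr i₀ hx'
      exact mem_map.mpr ⟨_, this, Fin.ext rfl⟩
  · rintro ⟨B, hBcard, hBcov⟩
    have cover2 : ∀ S : Finset (Fin V), S.card ≤ 2 → ∃ r, S ⊆ B r := by
      intro S hS
      obtain ⟨S', hSS', -, hS'⟩ := Finset.exists_subsuperset_card_eq (Finset.subset_univ S)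
        hS (by simpa using hKV.trans' hK2)
      obtain ⟨r, hr⟩ := hBcov S' hS'
      exact ⟨r, hSS'.trans hr⟩
    set f : ∀ i, Fin (v i) ↪ Fin V := fun i => (Fin.castLEOrderEmb (hVle i)).toEmbedding with hf
    have hpre : ∀ (r : Fin N) (i : Fin m),
        ((B r).preimage (f i) (Function.Injective.injOn (f i).injective)).card ≤ k i := by
      intro r i
      refine le_trans ?_ (hKle i)
      rw [← hBcard r]
      exact Finset.card_le_card_of_injOn (f i)
        (fun x hx => Finset.mem_preimage.mp hx) (Function.Injective.injOn (f i).injective)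
    have hexists : ∀ (r : Fin N) (i : Fin m), ∃ E : Finset (Fin (v i)),
        (B r).preimage (f i) (Function.Injective.injOn (f i).injective) ⊆ E ∧ E.card = k i := by
      intro r i
      obtain ⟨E, h1, -, h2⟩ := Finset.exists_subsuperset_card_eq (Finset.subset_univ _)
        (hpre r i) (by simpa using hkv i)
      exact ⟨E, h1, h2⟩
    choose D hDsub hDcard using hexists
    refine ⟨D, fun r i => hDcard r i, ?_⟩
    intro T hTle hTsum
    set U : Finset (Fin V) := Finset.univ.biUnion (fun i => (T i).map (f i)) with hU
    have hUcard : U.card ≤ 2 := by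
      refine le_trans (Finset.card_biUnion_le) ?_
      simp only [card_map]
      exact hTsum.le
    obtain ⟨r, hr⟩ := cover2 U hUcard
    refine ⟨r, fun i x hx => ?_⟩
    apply hDsub r i
    rw [Finset.mem_preimage]
    exact hr (Finset.mem_biUnion.mpr ⟨i, mem_univ i, mem_map_of_mem _ hx⟩)
end

section
/- Let D be a GC(v,k,2) with m ≥ 2 parts where k_1 ≥ 2 and k_2 ≥ 2. Replacing each block (B_1,B_2,B_3,…,B_m) by (B_1 ∪ B_2, B_3,…,B_m) yields a GC(v⁺,k⁺,2) where v⁺=(v_1+v_2,v_3,…,v_m) and k⁺=(k_1+k_2,k_3,…,k_m); hence C(v⁺,k⁺,2) ≤ C(v,k,2). -/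
open Finset

/-- The part sizes after amalgamating the two `Bool`-indexed parts into one `Unit`-indexed part. -/
def amalgSizes {ι : Type*} (v : Bool ⊕ ι → ℕ) : Unit ⊕ ι → ℕ :=
  Sum.elim (fun _ => v (.inl true) + v (.inl false)) (fun j => v (.inr j))

/-- Amalgamation of a block: the two `Bool`-indexed components are replaced by their
(disjoint) union inside `Fin (v(inl true) + v(inl false))`; all other components unchanged. -/
def amalgBlock {ι : Type*} [DecidableEq ι] (v : Bool ⊕ ι → ℕ)
    (B : ∀ i, Finset (Fin (v i))) :
    ∀ i : Unit ⊕ ι, Finset (Fin (amalgSizes v i))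
  | .inl _ => (B (.inl true)).map (Fin.castAddEmb (v (.inl false)))
      ∪ (B (.inl false)).map (Fin.natAddEmb (v (.inl true)))
  | .inr j => B (.inr j)


lemma amalg_isGCD {ι : Type*} [Fintype ι] [DecidableEq ι] {R : Type*}
    (v k : Bool ⊕ ι → ℕ) (hk2 : ∀ b : Bool, 2 ≤ k (.inl b))
    (D : R → ∀ i, Finset (Fin (v i))) (hD : IsGCD v k 2 D) :
    IsGCD (amalgSizes v) (amalgSizes k) 2 (fun r => amalgBlock v (D r)) := by
  obtain ⟨hcard, hcov⟩ := hD
  constructor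
  · rintro r (⟨⟩ | j)
    · show ((D r (.inl true)).map (Fin.castAddEmb (v (.inl false)))
          ∪ (D r (.inl false)).map (Fin.natAddEmb (v (.inl true)))).card
          = k (.inl true) + k (.inl false)
      rw [card_union_of_disjoint, card_map, card_map, hcard, hcard]
      rw [disjoint_left]
      rintro a ha hb
      simp only [mem_map, Fin.castAddEmb, Fin.natAddEmb, Function.Embedding.coeFn_mk] at ha hb
      obtain ⟨x, -, rfl⟩ := ha
      obtain ⟨y, -, hy⟩ := hb
      have h1 : (x : ℕ) < v (.inl true) := x.isLt
      have h2 : v (.inl true) + (y : ℕ) = (x : ℕ) := by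
        exact congrArg Fin.val hy
      omega
    · exact hcard r (.inr j)
  · intro T hTk hTsum
    set S : Finset (Fin (v (.inl true)) ⊕ Fin (v (.inl false))) :=
      (T (.inl ())).map finSumFinEquiv.symm.toEmbedding with hS
    have hScard : S.card = (T (.inl ())).card := card_map _
    set T' : ∀ i : Bool ⊕ ι, Finset (Fin (v i)) := fun i =>
      match i with
      | .inl true => S.toLeft
      | .inl false => S.toRight
      | .inr j => T (.inr j) with hT'
    have hsum1 : (T (.inl ())).card ≤ 2 := by
      rw [← hTsum]
      exact Finset.single_le_sum (f := fun i => (T i).card) (fun i _ => Nat.zero_le _) (mem_univ (Sum.inl ()))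
    have hsplit : S.toLeft.card + S.toRight.card = (T (.inl ())).card := by
      rw [card_toLeft_add_card_toRight, hScard]
    have hsum' : ∑ i, (T' i).card = 2 := by
      rw [Fintype.sum_sum_type] at hTsum ⊢
      have h0 : ∑ a₁ : Unit, (T (Sum.inl a₁)).card = (T (Sum.inl ())).card := by simp
      simp only [hT', Fintype.sum_bool]
      rw [hsplit]; rw [h0] at hTsum; exact hTsum
    obtain ⟨r, hr⟩ := hcov T' (by
      rintro ((_|_) | j)
      · show S.toRight.card ≤ k (.inl false)
        exact le_trans (by omega) (hk2 false)
      · show S.toLeft.card ≤ k (.inl true)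
        exact le_trans (by omega) (hk2 true)
      · exact hTk (.inr j))
      hsum'
    refine ⟨r, ?_⟩
    rintro (⟨⟩ | j)
    · intro x hx
      have hxS : finSumFinEquiv.symm x ∈ S := mem_map_of_mem _ hx
      show x ∈ (D r (.inl true)).map (Fin.castAddEmb (v (.inl false)))
          ∪ (D r (.inl false)).map (Fin.natAddEmb (v (.inl true)))
      have hex : finSumFinEquiv (finSumFinEquiv.symm x) = x := Equiv.apply_symm_apply _ _
      rcases hy : finSumFinEquiv.symm x with a | b
      · rw [hy] at hxS hex
        have ha : a ∈ S.toLeft := mem_toLeft.mpr hxS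
        have := hr (.inl true) ha
        refine mem_union_left _ (mem_map.mpr ⟨a, this, ?_⟩)
        rw [← hex]; rfl
      · rw [hy] at hxS hex
        have hb : b ∈ S.toRight := mem_toRight.mpr hxS
        have := hr (.inl false) hb
        refine mem_union_right _ (mem_map.mpr ⟨b, this, ?_⟩)
        rw [← hex]; rfl
    · exact hr (.inr j)

/-- Amalgamation: replacing each block `(B₁,B₂,B₃,…)` of a `GC(v,k,2)` (with `k₁,k₂ ≥ 2`)
by `(B₁ ∪ B₂,B₃,…)` yields a `GC(v⁺,k⁺,2)` where `v⁺ = (v₁+v₂,v₃,…)`, `k⁺ = (k₁+k₂,k₃,…)`;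
hence `C(v⁺,k⁺,2) ≤ C(v,k,2)`.  The two amalgamated parts are indexed by `Bool`,
the remaining parts by `ι`. -/
theorem gc_amalgamation {ι : Type*} [Fintype ι] [DecidableEq ι] {N : ℕ}
    (v k : Bool ⊕ ι → ℕ) (hkv : ∀ i, k i ≤ v i) (hk2 : ∀ b : Bool, 2 ≤ k (.inl b))
    (D : Fin N → ∀ i, Finset (Fin (v i))) (hD : IsGCD v k 2 D) :
    IsGCD (amalgSizes v) (amalgSizes k) 2 (fun r => amalgBlock v (D r))
      ∧ GCNum (amalgSizes v) (amalgSizes k) 2 ≤ GCNum v k 2 := by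
  refine ⟨amalg_isGCD v k hk2 D hD, ?_⟩
  have hmem : GCNum v k 2 ∈ {M | ∃ D' : Fin M → ∀ i, Finset (Fin (v i)), IsGCD v k 2 D'} :=
    Nat.sInf_mem ⟨N, D, hD⟩
  obtain ⟨D', hD'⟩ := hmem
  exact Nat.sInf_le ⟨fun r => amalgBlock v (D' r), amalg_isGCD v k hk2 D' hD'⟩
end

section
/- Suppose v ≥ k componentwise and r=(r_1,…,r_m) satisfies 0 ≤ r_i ≤ k_i − 2 for all i. Then C(v,k,2) ≤ C(v−r, k−r, 2). -/
open Finset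

lemma exists_gcd {ι : Type*} [Fintype ι] (v k : ι → ℕ) (t : ℕ)
    (hkv : ∀ i, k i ≤ v i) :
    ∃ N, ∃ D : Fin N → ∀ i, Finset (Fin (v i)), IsGCD v k t D := by
  classical
  let R := ∀ i, {s : Finset (Fin (v i)) // s.card = k i}
  obtain ⟨e⟩ := (Fintype.truncEquivFin R)
  refine ⟨Fintype.card R, fun n i => ((e.symm n) i).1, ?_, ?_⟩
  · intro n i; exact ((e.symm n) i).2
  · intro T hT _
    have h : ∀ i, ∃ s : Finset (Fin (v i)), T i ⊆ s ∧ s.card = k i := by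
      intro i
      exact Finset.exists_superset_card_eq (hT i) (by simpa using hkv i)
    choose S hS1 hS2 using h
    refine ⟨e (fun i => ⟨S i, hS2 i⟩), fun i => ?_⟩
    simpa using hS1 i

/-- If `0 ≤ r_i ≤ k_i - 2` for all `i`, then `C(v,k,2) ≤ C(v-r,k-r,2)`. -/
theorem gc_amalgamation_bound {m : ℕ} (v k r : Fin m → ℕ)
    (hkv : ∀ i, k i ≤ v i) (hr : ∀ i, r i + 2 ≤ k i) :
    GCNum v k 2 ≤ GCNum (fun i => v i - r i) (fun i => k i - r i) 2 := by
  classical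
  set v' : Fin m → ℕ := fun i => v i - r i with hv'
  set k' : Fin m → ℕ := fun i => k i - r i with hk'
  have hrk : ∀ i, r i ≤ k i := fun i => by have := hr i; omega
  have hrv : ∀ i, r i ≤ v i := fun i => le_trans (hrk i) (hkv i)
  have hvsum : ∀ i, v' i + r i = v i := fun i => Nat.sub_add_cancel (hrv i)
  have hksum : ∀ i, k' i + r i = k i := fun i => Nat.sub_add_cancel (hrk i)
  have hk2 : ∀ i, 2 ≤ k' i := fun i => by have := hr i; simp only [hk']; omega
  have hkv' : ∀ i, k' i ≤ v' i := fun i => Nat.sub_le_sub_right (hkv i) _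
  have hne : {N | ∃ D : Fin N → ∀ i, Finset (Fin (v' i)), IsGCD v' k' 2 D}.Nonempty := by
    obtain ⟨N, D, h⟩ := exists_gcd v' k' 2 hkv'
    exact ⟨N, D, h⟩
  obtain ⟨D, hD⟩ := Nat.sInf_mem hne
  apply Nat.sInf_le
  -- the embedding of the bottom part
  have hle : ∀ i, v' i ≤ v i := fun i => Nat.sub_le _ _
  let emb : ∀ i, Fin (v' i) ↪ Fin (v i) := fun i => Fin.castLEEmb (hle i)
  -- the top `r i` points
  let topEmb : ∀ i, Fin (r i) ↪ Fin (v i) :=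
    fun i => ⟨fun x => ⟨v' i + x.val, by have := x.isLt; have := hvsum i; omega⟩,
      fun a b hab => by
        apply Fin.ext
        have : v' i + a.val = v' i + b.val := congrArg Fin.val hab
        omega⟩
  let top : ∀ i, Finset (Fin (v i)) := fun i => Finset.map (topEmb i) Finset.univ
  let D' : Fin (GCNum v' k' 2) → ∀ i, Finset (Fin (v i)) :=
    fun n i => ((D n i).map (emb i)) ∪ top i
  refine ⟨D', ?_, ?_⟩
  · intro n i
    have hdisj : Disjoint ((D n i).map (emb i)) (top i) := by
      rw [Finset.disjoint_left]
      intro x hx hx'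
      simp only [Finset.mem_map, top] at hx hx'
      obtain ⟨a, _, rfl⟩ := hx
      obtain ⟨b, _, hb⟩ := hx'
      have h1 : (v' i + b.val : ℕ) = ((emb i) a).val := congrArg Fin.val hb
      have h2 : ((emb i) a).val = a.val := rfl
      have := a.isLt
      omega
    rw [Finset.card_union_of_disjoint hdisj, Finset.card_map]
    simp only [top, Finset.card_map, Finset.card_univ, Fintype.card_fin]
    rw [(hD.1 n i : (D n i).card = k' i)]
    exact hksum i
  · intro T hT hTsum
    rcases Nat.eq_zero_or_pos m with hm | hm
    · exfalso; subst hm; simp at hTsum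
    -- bottom parts of T
    let B : ∀ i, Finset (Fin (v' i)) := fun i =>
      Finset.univ.filter (fun y => (emb i) y ∈ T i)
    have hBcardle : ∀ i, (B i).card ≤ (T i).card := by
      intro i
      calc (B i).card = ((B i).map (emb i)).card := (Finset.card_map _).symm
        _ ≤ (T i).card := by
            apply Finset.card_le_card
            intro x hx
            simp only [Finset.mem_map, B, Finset.mem_filter] at hx
            obtain ⟨a, ⟨_, ha⟩, rfl⟩ := hx
            exact ha
    have hT2 : ∀ i, (T i).card ≤ 2 := by
      intro i
      rw [← hTsum]
      exact Finset.single_le_sum (f := fun j => (T j).card) (fun j _ => Nat.zero_le _) (Finset.mem_univ i)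
    have hBsum : ∑ i, (B i).card ≤ 2 := by
      rw [← hTsum]
      exact Finset.sum_le_sum (fun i _ => hBcardle i)
    set i0 : Fin m := ⟨0, hm⟩
    set d : ℕ := 2 - ∑ i, (B i).card with hd
    have hsplit : ∑ i, (B i).card =
        ∑ i ∈ Finset.univ \ {i0}, (B i).card + (B i0).card := by
      rw [Finset.sum_eq_sum_sdiff_singleton_add (Finset.mem_univ i0)]
    have hcard0 : (B i0).card + d ≤ 2 := by omega
    obtain ⟨S, hSsub, hScard⟩ :=
      Finset.exists_superset_card_eq (s := B i0) (n := (B i0).card + d)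
        (Nat.le_add_right _ _)
        (by
          have : (2:ℕ) ≤ v' i0 := le_trans (hk2 i0) (hkv' i0)
          simpa using le_trans hcard0 this)
    let B' : ∀ i, Finset (Fin (v' i)) := fun i => if h : i = i0 then h ▸ S else B i
    have hB'0 : B' i0 = S := by simp [B']
    have hB'ne : ∀ i, i ≠ i0 → B' i = B i := by intro i h; simp [B', h]
    have hBsubB' : ∀ i, B i ⊆ B' i := by
      intro i
      by_cases h : i = i0
      · subst h; rw [hB'0]; exact hSsub
      · rw [hB'ne i h]
    have hB'sum : ∑ i, (B' i).card = 2 := by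
      rw [Finset.sum_eq_sum_sdiff_singleton_add (Finset.mem_univ i0)]
      rw [Finset.sum_congr rfl (fun i hi => by
        rw [hB'ne i (by simpa using (Finset.mem_sdiff.mp hi).2)])]
      rw [hB'0, hScard]
      omega
    have hB'card : ∀ i, (B' i).card ≤ k' i := by
      intro i
      by_cases h : i = i0
      · subst h; rw [hB'0, hScard]; exact le_trans hcard0 (hk2 i0)
      · rw [hB'ne i h]
        exact le_trans (le_trans (hBcardle i) (hT2 i)) (hk2 i)
    obtain ⟨n, hn⟩ := hD.2 B' hB'card hB'sum
    refine ⟨n, fun i => ?_⟩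
    intro x hx
    simp only [D', Finset.mem_union]
    by_cases hxb : x.val < v' i
    · left
      refine Finset.mem_map.mpr ⟨⟨x.val, hxb⟩, ?_, Fin.ext rfl⟩
      apply hn i
      apply hBsubB'
      simp only [B, Finset.mem_filter, Finset.mem_univ, true_and]
      have : (emb i) ⟨x.val, hxb⟩ = x := Fin.ext rfl
      rw [this]; exact hx
    · right
      simp only [top, Finset.mem_map]
      have hx1 : x.val < v i := x.isLt
      have hx2 : x.val - v' i < r i := by have := hvsum i; omega
      exact ⟨⟨x.val - v' i, hx2⟩, Finset.mem_univ _, Fin.ext (by show v' i + (x.val - v' i) = x.val; omega)⟩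
end
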